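/- Let I be an interval and f, g : I → ℝ. If for all x, y ∈ I and t ∈ [0,1] we have f(tx+(1-t)y) ≤ t·g(x)+(1-t)·g(y) and g(tx+(1-t)y) ≥ t·f(x)+(1-t)·f(y), then there exists an affine function h : ℝ → ℝ such that f(x) ≤ h(x) ≤ g(x) for all x ∈ I. -/

import Mathlib

theorem stmt_0 (I : Set ℝ) (hI : I.OrdConnected) (hne : I.Nonempty)
    (f g : ℝ → ℝ)
    (h1 : ∀ x ∈ I, ∀ y ∈ I, ∀ t ∈ Set.Icc (0:ℝ) 1,
      f (t * x + (1 - t) * y) ≤ t * g x + (1 - t) * g y)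
    (h2 : ∀ x ∈ I, ∀ y ∈ I, ∀ t ∈ Set.Icc (0:ℝ) 1,
      t * f x + (1 - t) * f y ≤ g (t * x + (1 - t) * y)) :
    ∃ a b : ℝ, ∀ x ∈ I, f x ≤ a * x + b ∧ a * x + b ≤ g x := by
  have hfg : ∀ x ∈ I, f x ≤ g x := by
    intro x hx
    have := h1 x hx x hx 1 (by norm_num)
    simpa using this
  -- chord upper bound from h1 : f at a middle point is below the g-chord
  have chordU : ∀ x ∈ I, ∀ y ∈ I, ∀ z, x ≤ z → z ≤ y → x < y →
      (y - x) * f z ≤ (y - z) * g x + (z - x) * g y := by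
    intro x hx y hy z hxz hzy hxy
    have hyx : (0:ℝ) < y - x := by linarith
    have ht : (y - z)/(y - x) ∈ Set.Icc (0:ℝ) 1 := by
      constructor
      · apply div_nonneg <;> linarith
      · rw [div_le_one hyx]; linarith
    have h := h1 x hx y hy _ ht
    have hz : (y - z)/(y - x) * x + (1 - (y - z)/(y - x)) * y = z := by
      field_simp
      ring
    rw [hz] at h
    have h3 := mul_le_mul_of_nonneg_left h hyx.le
    have h4 : (y - x) * ((y - z)/(y - x) * g x + (1 - (y - z)/(y - x)) * g y)
        = (y - z) * g x + (z - x) * g y := by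
      field_simp
      ring
    rw [h4] at h3
    linarith
  -- chord lower bound from h2 : g at a middle point is above the f-chord
  have chordD : ∀ x ∈ I, ∀ y ∈ I, ∀ z, x ≤ z → z ≤ y → x < y →
      (y - z) * f x + (z - x) * f y ≤ (y - x) * g z := by
    intro x hx y hy z hxz hzy hxy
    have hyx : (0:ℝ) < y - x := by linarith
    have ht : (y - z)/(y - x) ∈ Set.Icc (0:ℝ) 1 := by
      constructor
      · apply div_nonneg <;> linarith
      · rw [div_le_one hyx]; linarith
    have h := h2 x hx y hy _ ht
    have hz : (y - z)/(y - x) * x + (1 - (y - z)/(y - x)) * y = z := by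
      field_simp
      ring
    rw [hz] at h
    have h3 := mul_le_mul_of_nonneg_left h hyx.le
    have h4 : (y - x) * ((y - z)/(y - x) * f x + (1 - (y - z)/(y - x)) * f y)
        = (y - z) * f x + (z - x) * f y := by
      field_simp
      ring
    rw [h4] at h3
    linarith
  -- the key cross inequality between slopes
  have key : ∀ u ∈ I, ∀ v ∈ I, ∀ s ∈ I, ∀ t ∈ I, u < v → s < t →
      (f v - g u) * (t - s) ≤ (g t - f s) * (v - u) := by
    intro u hu v hv s hs t ht huv hst
    rcases le_total u s with hus | hsu
    · rcases le_total v t with hvt | htv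
      · -- u ≤ s, v ≤ t : bound f v and f s by chords over [u, t]
        have htu : (0:ℝ) < t - u := by linarith
        have c1 := chordU u hu t ht v (by linarith) hvt (by linarith)
        have c2 := chordU u hu t ht s hus hst.le (by linarith)
        have e1 := mul_le_mul_of_nonneg_left c1 (by linarith : (0:ℝ) ≤ t - s)
        have e2 := mul_le_mul_of_nonneg_left c2 (by linarith : (0:ℝ) ≤ v - u)
        have hm : (t - u) * ((f v - g u) * (t - s)) ≤ (t - u) * ((g t - f s) * (v - u)) := by
          nlinarith [e1, e2]
        exact le_of_mul_le_mul_left hm htu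
      · -- u ≤ s < t ≤ v : [s,t] inside [u,v]
        have c1 := chordU u hu t ht s hus hst.le (by linarith)
        have c2 := chordD s hs v hv t hst.le htv (by linarith)
        linarith
    · rcases le_total v t with hvt | htv
      · -- s ≤ u < v ≤ t : [u,v] inside [s,t]
        have c1 := chordD s hs v hv u hsu huv.le (by linarith)
        have c2 := chordU u hu t ht v huv.le hvt (by linarith)
        linarith
      · -- s ≤ u, t ≤ v : bound g u and g t by chords over [s, v]
        have hvs : (0:ℝ) < v - s := by linarith
        have c1 := chordD s hs v hv u hsu huv.le (by linarith)
        have c2 := chordD s hs v hv t (by linarith) htv (by linarith)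
        have e1 := mul_le_mul_of_nonneg_left c1 (by linarith : (0:ℝ) ≤ t - s)
        have e2 := mul_le_mul_of_nonneg_left c2 (by linarith : (0:ℝ) ≤ v - u)
        have hm : (v - s) * ((f v - g u) * (t - s)) ≤ (v - s) * ((g t - f s) * (v - u)) := by
          nlinarith [e1, e2]
        exact le_of_mul_le_mul_left hm hvs
  by_cases hsing : ∀ x ∈ I, ∀ y ∈ I, x = y
  · obtain ⟨c, hc⟩ := hne
    refine ⟨0, f c, ?_⟩
    intro x hx
    have hxc := hsing x hx c hc
    subst hxc
    constructor
    · simp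
    · simpa using hfg x hx
  · push_neg at hsing
    obtain ⟨x₀, hx₀, y₀, hy₀, hxy₀⟩ := hsing
    obtain ⟨p, hp, q, hq, hpq⟩ : ∃ p ∈ I, ∃ q ∈ I, p < q := by
      rcases lt_or_gt_of_ne hxy₀ with h | h
      · exact ⟨x₀, hx₀, y₀, hy₀, h⟩
      · exact ⟨y₀, hy₀, x₀, hx₀, h⟩
    set S : Set ℝ := {r | ∃ u ∈ I, ∃ v ∈ I, u < v ∧ r = (f v - g u) / (v - u)} with hS
    have hSne : S.Nonempty := ⟨(f q - g p) / (q - p), p, hp, q, hq, hpq, rfl⟩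
    have hSbdd : BddAbove S := by
      refine ⟨(g q - f p) / (q - p), ?_⟩
      rintro r ⟨u, hu, v, hv, huv, rfl⟩
      rw [div_le_div_iff₀ (by linarith) (by linarith)]
      exact key u hu v hv p hp q hq huv hpq
    set a : ℝ := sSup S with ha
    have haub : ∀ u ∈ I, ∀ v ∈ I, u < v → f v - g u ≤ a * (v - u) := by
      intro u hu v hv huv
      have h := le_csSup hSbdd ⟨u, hu, v, hv, huv, rfl⟩
      have hvu : (0:ℝ) < v - u := by linarith
      rw [div_le_iff₀ hvu] at h
      linarith
    have halb : ∀ s ∈ I, ∀ t ∈ I, s < t → a * (t - s) ≤ g t - f s := by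
      intro s hs t ht hst
      have h : a ≤ (g t - f s) / (t - s) := by
        apply csSup_le hSne
        rintro r ⟨u, hu, v, hv, huv, rfl⟩
        rw [div_le_div_iff₀ (by linarith) (by linarith)]
        exact key u hu v hv s hs t ht huv hst
      have hts : (0:ℝ) < t - s := by linarith
      rw [le_div_iff₀ hts] at h
      linarith
    have hcross : ∀ x ∈ I, ∀ y ∈ I, f x - a * x ≤ g y - a * y := by
      intro x hx y hy
      rcases lt_trichotomy x y with h | h | h
      · have := halb x hx y hy h
        linarith
      · subst h
        have := hfg x hx
        linarith
      · have := haub y hy x hx h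
        linarith
    set T : Set ℝ := {r | ∃ x ∈ I, r = f x - a * x} with hT
    have hTne : T.Nonempty := ⟨f p - a * p, p, hp, rfl⟩
    have hTbdd : BddAbove T := by
      refine ⟨g p - a * p, ?_⟩
      rintro r ⟨x, hx, rfl⟩
      exact hcross x hx p hp
    refine ⟨a, sSup T, ?_⟩
    intro x hx
    constructor
    · have := le_csSup hTbdd ⟨x, hx, rfl⟩
      linarith
    · have : sSup T ≤ g x - a * x := by
        apply csSup_le hTne
        rintro r ⟨y, hy, rfl⟩
        exact hcross y hy x hx
      linarith
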